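/- For ν > 0 and t ∈ ℝ with t mod 2π ≠ 0, as n → ∞: Σ_{k=n+1}^{∞} cos(kt)/k^{ν+1} = -D_n(t) n^{-ν-1} + O(n^{-ν-2}), where D_n(t) = sin((2n+1)t/2)/(2 sin(t/2)) is the Dirichlet kernel. -/

import Mathlib

open Real Filter Asymptotics

/-- Generic Abel summation step for absolutely convergent series. -/
lemma abel_step' (σ c : ℕ → ℝ)
    (h1 : Summable fun k => σ (k+1) * c (k+1))
    (h2 : Summable fun k => σ k * c (k+1)) :
    ∑' k, (σ (k+1) - σ k) * c (k+1)
      = -(σ 0 * c 1) + ∑' k, σ (k+1) * (c (k+1) - c (k+2)) := by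
  have h3 : Summable fun k => σ (k+1) * c (k+2) := by
    have := (summable_nat_add_iff 1).2 h2
    simpa using this
  have e1 : ∑' k, (σ (k+1) - σ k) * c (k+1)
      = (∑' k, σ (k+1) * c (k+1)) - ∑' k, σ k * c (k+1) := by
    rw [← Summable.tsum_sub h1 h2]; exact tsum_congr fun k => by ring
  have e2 : ∑' k, σ k * c (k+1) = σ 0 * c 1 + ∑' k, σ (k+1) * c (k+2) := by
    simpa using Summable.tsum_eq_zero_add h2
  have e3 : ∑' k, σ (k+1) * (c (k+1) - c (k+2))
      = (∑' k, σ (k+1) * c (k+1)) - ∑' k, σ (k+1) * c (k+2) := by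
    rw [← Summable.tsum_sub h1 h3]; congr 1; funext k; ring
  rw [e1, e2, e3]; ring

/-- Telescoping tsum. -/
lemma tsum_telescope' (u : ℕ → ℝ) (h : Summable fun k => u k - u (k+1))
    (h0 : Tendsto u atTop (nhds 0)) : ∑' k, (u k - u (k+1)) = u 0 := by
  refine (h.hasSum_iff_tendsto_nat.2 ?_).tsum_eq
  have : (fun n => ∑ i ∈ Finset.range n, (u i - u (i+1))) = fun n => u 0 - u n := by
    funext n; exact Finset.sum_range_sub' u n
  rw [this]
  simpa using tendsto_const_nhds.sub h0

/-- Mean value theorem for negative powers. -/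
lemma slope_rpow' (p : ℝ) {x : ℝ} (hx : 0 < x) :
    ∃ c ∈ Set.Ioo x (x+1), x ^ (-p) - (x+1) ^ (-p) = p * c ^ (-p-1) := by
  obtain ⟨c, hc, hceq⟩ := exists_hasDerivAt_eq_slope (fun y => y ^ (-p))
      (fun y => (-p) * y ^ (-p-1)) (by linarith : x < x + 1)
      (fun y hy => by
        have hy0 : y ≠ 0 := by rcases hy with ⟨h1, _⟩; nlinarith
        exact (Real.continuousAt_rpow_const y (-p) (Or.inl hy0)).continuousWithinAt)
      (fun y hy => by
        have hy0 : y ≠ 0 := by rcases hy with ⟨h1, _⟩; nlinarith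
        have := Real.hasDerivAt_rpow_const (p := -p) (Or.inl hy0)
        simpa [sub_eq_add_neg] using this)
  refine ⟨c, hc, ?_⟩
  have h2 : (-p) * c ^ (-p-1) = ((x+1) ^ (-p) - x ^ (-p)) / (x + 1 - x) := hceq
  rw [show x + 1 - x = 1 by ring, div_one] at h2
  linarith

theorem cos_tail_dirichlet_asymptotic (ν t : ℝ) (hν : ν > 0)
    (ht : Real.sin (t / 2) ≠ 0) :
    (fun n : ℕ =>
        (∑' k : ℕ, Real.cos ((k + n + 1 : ℕ) * t) / ((k + n + 1 : ℕ) : ℝ) ^ (ν + 1)) +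
          (Real.sin ((2 * n + 1) * t / 2) / (2 * Real.sin (t / 2))) *
            (n : ℝ) ^ (-ν - 1)) =O[atTop]
      (fun n : ℕ => (n : ℝ) ^ (-ν - 2)) := by
  set p : ℝ := ν + 1 with hp_def
  have hp1 : 1 < p := by simp [hp_def]; linarith
  have hp0 : 0 < p := by linarith
  set s : ℝ := Real.sin (t / 2) with hs_def
  have hs0 : 0 < |s| := abs_pos.2 ht
  -- basic objects
  set a : ℕ → ℝ := fun m => (m : ℝ) ^ (-p) with ha_def
  set b : ℕ → ℝ := fun m => a m - a (m+1) with hb_def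
  set Sn : ℕ → ℝ := fun m => Real.sin ((2 * (m:ℝ) + 1) * t / 2) with hSn_def
  set Cn : ℕ → ℝ := fun m => Real.cos ((m:ℝ) * t) with hCn_def
  have ha_nonneg : ∀ m : ℕ, 0 ≤ a m := fun m => Real.rpow_nonneg (Nat.cast_nonneg m) _
  have haS : ∀ m : ℕ, |Sn m| ≤ 1 := fun m => Real.abs_sin_le_one _
  have haC : ∀ m : ℕ, |Cn m| ≤ 1 := fun m => Real.abs_cos_le_one _
  -- trig identities
  have hSdiff : ∀ m : ℕ, Sn (m+1) - Sn m = 2 * s * Cn (m+1) := by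
    intro m
    simp only [hSn_def, hCn_def, Nat.cast_add, Nat.cast_one]
    rw [Real.sin_sub_sin,
      show ((2 * ((m:ℝ)+1) + 1) * t / 2 - (2 * (m:ℝ) + 1) * t / 2) / 2 = t / 2 by ring,
      show ((2 * ((m:ℝ)+1) + 1) * t / 2 + (2 * (m:ℝ) + 1) * t / 2) / 2 = ((m:ℝ)+1) * t by ring]
  have hCdiff : ∀ m : ℕ, Cn m - Cn (m+1) = 2 * s * Sn m := by
    intro m
    simp only [hSn_def, hCn_def, Nat.cast_add, Nat.cast_one]
    rw [Real.cos_sub_cos,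
      show ((m:ℝ) * t + ((m:ℝ)+1) * t) / 2 = (2 * (m:ℝ) + 1) * t / 2 by ring,
      show ((m:ℝ) * t - ((m:ℝ)+1) * t) / 2 = -(t/2) by ring, Real.sin_neg]
    ring
  -- mean value facts about b
  have hb_mvt : ∀ m : ℕ, 1 ≤ m →
      ∃ c ∈ Set.Ioo ((m:ℝ)) ((m:ℝ)+1), b m = p * c ^ (-p-1) := by
    intro m hm
    have hmpos : (0:ℝ) < m := by exact_mod_cast hm
    obtain ⟨c, hc, hceq⟩ := slope_rpow' p hmpos
    refine ⟨c, hc, ?_⟩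
    simp only [hb_def, ha_def, Nat.cast_add, Nat.cast_one]
    exact hceq
  have hb_nonneg : ∀ m : ℕ, 1 ≤ m → 0 ≤ b m := by
    intro m hm
    obtain ⟨c, hc, hceq⟩ := hb_mvt m hm
    have hc0 : (0:ℝ) < c := lt_trans (by exact_mod_cast hm) hc.1
    rw [hceq]
    positivity
  have hb_le : ∀ m : ℕ, 1 ≤ m → b m ≤ p * (m:ℝ) ^ (-p-1) := by
    intro m hm
    obtain ⟨c, hc, hceq⟩ := hb_mvt m hm
    have hmpos : (0:ℝ) < m := by exact_mod_cast hm
    rw [hceq]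
    have := Real.rpow_le_rpow_of_nonpos hmpos (le_of_lt hc.1) (by linarith : -p-1 ≤ 0)
    nlinarith
  have hb_anti : ∀ m : ℕ, 1 ≤ m → b (m+1) ≤ b m := by
    intro m hm
    obtain ⟨c1, hc1, he1⟩ := hb_mvt m hm
    obtain ⟨c2, hc2, he2⟩ := hb_mvt (m+1) (le_trans hm (Nat.le_succ m))
    have hm1 : ((m+1 : ℕ):ℝ) = (m:ℝ) + 1 := by push_cast; ring
    have hc1pos : (0:ℝ) < c1 := lt_trans (by exact_mod_cast hm) hc1.1
    have hcc : c1 ≤ c2 := by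
      have := hc1.2
      have := hc2.1
      rw [hm1] at this
      linarith
    rw [he1, he2]
    have := Real.rpow_le_rpow_of_nonpos hc1pos hcc (by linarith : -p-1 ≤ 0)
    nlinarith
  -- tendsto facts
  have haT : Tendsto (fun m : ℕ => a m) atTop (nhds 0) := by
    have : Tendsto (fun x : ℝ => x ^ (-p)) atTop (nhds 0) := tendsto_rpow_neg_atTop hp0
    exact this.comp tendsto_natCast_atTop_atTop
  have hb_le_a : ∀ m : ℕ, b m ≤ a m := by
    intro m
    have := ha_nonneg (m+1)
    simp only [hb_def]; linarith
  have hbT : Tendsto (fun m : ℕ => b m) atTop (nhds 0) := by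
    apply squeeze_zero' (g := fun m : ℕ => a m)
    · filter_upwards [eventually_ge_atTop 1] with m hm using hb_nonneg m hm
    · filter_upwards with m using hb_le_a m
    · exact haT
  -- summability
  have hsum : ∀ n : ℕ, Summable (fun k : ℕ => a (k+n+1)) := by
    intro n
    have h0 : Summable (fun m : ℕ => a m) := by
      simpa [ha_def] using Real.summable_nat_rpow.2 (by linarith : -p < -1)
    have := (summable_nat_add_iff (n+1)).2 h0
    simpa [← add_assoc] using this
  have hdom : ∀ n : ℕ, ∀ g : ℕ → ℝ, (∀ k, |g k| ≤ a (k+n+1)) → Summable g := by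
    intro n g hg
    exact Summable.of_norm_bounded (hsum n) (by simpa [Real.norm_eq_abs] using hg)
  have hb_abs : ∀ n : ℕ, ∀ k : ℕ, |b (k+n+1)| ≤ a (k+n+1) := by
    intro n k
    rw [abs_of_nonneg (hb_nonneg _ (by omega))]
    exact hb_le_a _
  -- step A
  set T : ℕ → ℝ := fun n => ∑' k : ℕ, Cn (k+n+1) * a (k+n+1) with hT_def
  set U : ℕ → ℝ := fun n => ∑' k : ℕ, Sn (k+n+1) * b (k+n+1) with hU_def
  have hA : ∀ n : ℕ, 2 * s * T n = -(Sn n * a (n+1)) + U n := by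
    intro n
    have h1 : Summable fun k => Sn (n+k+1) * a (n+(k+1)) := by
      apply hdom n
      intro k
      rw [show n+(k+1) = k+n+1 by omega, abs_mul]
      calc |Sn (n+k+1)| * |a (k+n+1)| ≤ 1 * |a (k+n+1)| :=
            mul_le_mul_of_nonneg_right (haS _) (abs_nonneg _)
        _ = a (k+n+1) := by rw [one_mul, abs_of_nonneg (ha_nonneg _)]
    have h2 : Summable fun k => Sn (n+k) * a (n+(k+1)) := by
      apply hdom n
      intro k
      rw [show n+(k+1) = k+n+1 by omega, abs_mul]
      calc |Sn (n+k)| * |a (k+n+1)| ≤ 1 * |a (k+n+1)| :=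
            mul_le_mul_of_nonneg_right (haS _) (abs_nonneg _)
        _ = a (k+n+1) := by rw [one_mul, abs_of_nonneg (ha_nonneg _)]
    have key := abel_step' (fun k => Sn (n+k)) (fun j => a (n+j)) h1 h2
    have lhs_eq : ∑' k, (Sn (n+(k+1)) - Sn (n+k)) * a (n+(k+1))
        = 2 * s * T n := by
      rw [hT_def, ← tsum_mul_left]
      apply tsum_congr
      intro k
      rw [show n+(k+1) = (n+k)+1 by omega, hSdiff (n+k),
        show n+k+1 = k+n+1 by omega]
      ring
    have rhs_eq : ∑' (k : ℕ), Sn (n+(k+1)) * (a (n+(k+1)) - a (n+(k+2)))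
        = U n := by
      rw [hU_def]
      apply tsum_congr
      intro k
      rw [show n+(k+1) = k+n+1 by omega, show n+(k+2) = (k+n+1)+1 by omega]
    rw [← lhs_eq, key, rhs_eq]
    simp
  -- step B
  set V : ℕ → ℝ := fun n => ∑' k : ℕ, (-(Cn (k+n+2))) * (b (k+n+1) - b (k+n+2)) with hV_def
  have hB : ∀ n : ℕ, 2 * s * U n = Cn (n+1) * b (n+1) + V n := by
    intro n
    have h1 : Summable fun k => (-(Cn (n+(k+1)+1))) * b (n+(k+1)) := by
      apply hdom n
      intro k
      rw [show n+(k+1) = k+n+1 by omega, abs_mul, abs_neg]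
      calc |Cn (k+n+1+1)| * |b (k+n+1)| ≤ 1 * |b (k+n+1)| :=
            mul_le_mul_of_nonneg_right (haC _) (abs_nonneg _)
        _ ≤ a (k+n+1) := by rw [one_mul]; exact hb_abs n k
    have h2 : Summable fun k => (-(Cn (n+k+1))) * b (n+(k+1)) := by
      apply hdom n
      intro k
      rw [show n+(k+1) = k+n+1 by omega, abs_mul, abs_neg]
      calc |Cn (n+k+1)| * |b (k+n+1)| ≤ 1 * |b (k+n+1)| :=
            mul_le_mul_of_nonneg_right (haC _) (abs_nonneg _)
        _ ≤ a (k+n+1) := by rw [one_mul]; exact hb_abs n k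
    have key := abel_step' (fun k => -(Cn (n+k+1))) (fun j => b (n+j)) h1 h2
    have lhs_eq : ∑' k, ((-(Cn (n+(k+1)+1))) - (-(Cn (n+k+1)))) * b (n+(k+1))
        = 2 * s * U n := by
      rw [hU_def, ← tsum_mul_left]
      apply tsum_congr
      intro k
      have : (-(Cn (n+(k+1)+1))) - (-(Cn (n+k+1))) = Cn (n+k+1) - Cn ((n+k+1)+1) := by
        rw [show n+(k+1)+1 = (n+k+1)+1 by omega]; ring
      rw [this, hCdiff (n+k+1), show n+k+1 = k+n+1 by omega]
      ring
    have rhs_eq : ∑' (k : ℕ), (-(Cn (n+(k+1)+1))) * (b (n+(k+1)) - b (n+(k+2)))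
        = V n := by
      rw [hV_def]
      apply tsum_congr
      intro k
      rw [show n+(k+1)+1 = k+n+2 by omega, show n+(k+1) = k+n+1 by omega,
        show n+(k+2) = k+n+2 by omega]
    rw [← lhs_eq, key, rhs_eq]
    simp
  -- bound on V
  have hdsum : ∀ n : ℕ, Summable (fun k : ℕ => b (k+n+1) - b (k+n+2)) := by
    intro n
    apply hdom n
    intro k
    rw [abs_of_nonneg (by
      have := hb_anti (k+n+1) (by omega)
      rw [show (k+n+1)+1 = k+n+2 by omega] at this
      linarith)]
    have h1 := hb_abs n k
    have h2 : 0 ≤ b (k+n+2) := hb_nonneg _ (by omega)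
    rw [abs_of_nonneg (hb_nonneg _ (by omega))] at h1
    linarith
  have hVtel : ∀ n : ℕ, ∑' k : ℕ, (b (k+n+1) - b (k+n+2)) = b (n+1) := by
    intro n
    have key := tsum_telescope' (fun k => b (k+n+1))
      (by
        simpa [show ∀ k : ℕ, k+1+n+1 = k+n+2 from fun k => by omega] using hdsum n)
      (by
        have hmono : Tendsto (fun k : ℕ => k+n+1) atTop atTop :=
          tendsto_atTop_mono (fun k => by omega : ∀ k : ℕ, k ≤ k+n+1) tendsto_id
        exact hbT.comp hmono)
    simpa [show ∀ k : ℕ, k+1+n+1 = k+n+2 from fun k => by omega] using key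
  have hVsum : ∀ n : ℕ, Summable (fun k : ℕ => (-(Cn (k+n+2))) * (b (k+n+1) - b (k+n+2))) := by
    intro n
    apply hdom n
    intro k
    rw [abs_mul, abs_neg]
    have hd : |b (k+n+1) - b (k+n+2)| ≤ a (k+n+1) := by
      rw [abs_of_nonneg (by
        have := hb_anti (k+n+1) (by omega)
        rw [show (k+n+1)+1 = k+n+2 by omega] at this
        linarith)]
      have h1 := hb_abs n k
      have h2 : 0 ≤ b (k+n+2) := hb_nonneg _ (by omega)
      rw [abs_of_nonneg (hb_nonneg _ (by omega))] at h1
      linarith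
    calc |Cn (k+n+2)| * |b (k+n+1) - b (k+n+2)| ≤ 1 * |b (k+n+1) - b (k+n+2)| :=
          mul_le_mul_of_nonneg_right (haC _) (abs_nonneg _)
      _ ≤ a (k+n+1) := by rw [one_mul]; exact hd
  have hVbound : ∀ n : ℕ, |V n| ≤ b (n+1) := by
    intro n
    have hnorm : ∀ k : ℕ, ‖(-(Cn (k+n+2))) * (b (k+n+1) - b (k+n+2))‖
        ≤ b (k+n+1) - b (k+n+2) := by
      intro k
      rw [Real.norm_eq_abs, abs_mul, abs_neg]
      have hd0 : 0 ≤ b (k+n+1) - b (k+n+2) := by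
        have := hb_anti (k+n+1) (by omega)
        rw [show (k+n+1)+1 = k+n+2 by omega] at this
        linarith
      calc |Cn (k+n+2)| * |b (k+n+1) - b (k+n+2)| ≤ 1 * |b (k+n+1) - b (k+n+2)| :=
            mul_le_mul_of_nonneg_right (haC _) (abs_nonneg _)
        _ = b (k+n+1) - b (k+n+2) := by rw [one_mul, abs_of_nonneg hd0]
    have habs : Summable (fun k : ℕ => ‖(-(Cn (k+n+2))) * (b (k+n+1) - b (k+n+2))‖) := by
      simpa only [Real.norm_eq_abs] using (hVsum n).abs
    calc |V n| ≤ ∑' k : ℕ, ‖(-(Cn (k+n+2))) * (b (k+n+1) - b (k+n+2))‖ := by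
          rw [hV_def, ← Real.norm_eq_abs]
          exact norm_tsum_le_tsum_norm habs
      _ ≤ ∑' k : ℕ, (b (k+n+1) - b (k+n+2)) := Summable.tsum_le_tsum hnorm habs (hdsum n)
      _ = b (n+1) := hVtel n
  -- bound on U
  have h2s : (2*s) ≠ 0 := mul_ne_zero two_ne_zero ht
  have hUbound : ∀ n : ℕ, |U n| ≤ b (n+1) / |s| := by
    intro n
    have hB' := hB n
    have h1 : |2*s*U n| ≤ 2 * b (n+1) := by
      rw [hB']
      have hb1 : 0 ≤ b (n+1) := hb_nonneg _ (by omega)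
      calc |Cn (n+1) * b (n+1) + V n| ≤ |Cn (n+1) * b (n+1)| + |V n| := abs_add_le _ _
        _ ≤ 1 * b (n+1) + b (n+1) := by
            apply add_le_add _ (hVbound n)
            rw [abs_mul]
            apply mul_le_mul (haC _) (le_of_eq (abs_of_nonneg hb1)) (abs_nonneg _)
            norm_num
        _ = 2 * b (n+1) := by ring
    rw [abs_mul, abs_mul, abs_two] at h1
    rw [le_div_iff₀ hs0]
    nlinarith [abs_nonneg (U n)]
  -- main pointwise bound
  set K : ℝ := p * (1 + 1/|s|) / (2*|s|) with hK_def
  have hmain : ∀ n : ℕ, 1 ≤ n →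
      |T n + (Sn n / (2*s)) * a n| ≤ K * (n:ℝ) ^ (-p-1) := by
    intro n hn
    have hb' : b n = a n - a (n+1) := rfl
    have hTn : T n + (Sn n / (2*s)) * a n = (Sn n * b n + U n) / (2*s) := by
      rw [hb', eq_div_iff h2s]
      field_simp
      linarith [hA n]
    rw [hTn]
    have hx : (0:ℝ) ≤ (n:ℝ) ^ (-p-1) := Real.rpow_nonneg (Nat.cast_nonneg n) _
    have hbn := hb_le n hn
    have hba := hb_anti n hn
    have hb0 := hb_nonneg n hn
    have hXb : |Sn n * b n + U n| ≤ b n + b n / |s| := by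
      calc |Sn n * b n + U n| ≤ |Sn n * b n| + |U n| := abs_add_le _ _
        _ ≤ 1 * b n + b (n+1) / |s| := by
            apply add_le_add _ (hUbound n)
            rw [abs_mul]
            exact mul_le_mul (haS _) (le_of_eq (abs_of_nonneg hb0)) (abs_nonneg _) zero_le_one
        _ ≤ b n + b n / |s| := by
            rw [one_mul]
            gcongr
    have step1 : |(Sn n * b n + U n) / (2*s)| ≤ (b n + b n / |s|) / (2*|s|) := by
      rw [abs_div, abs_mul, abs_two]
      exact (div_le_div_iff_of_pos_right (by positivity)).2 hXb
    have step2 : (b n + b n / |s|) / (2*|s|) ≤ K * (n:ℝ) ^ (-p-1) := by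
      have hK : K * (n:ℝ) ^ (-p-1)
          = (p * (n:ℝ) ^ (-p-1) + p * (n:ℝ) ^ (-p-1) / |s|) / (2*|s|) := by
        rw [hK_def]
        field_simp
      rw [hK]
      gcongr
    exact step1.trans step2
  -- assemble
  rw [isBigO_iff]
  refine ⟨K, ?_⟩
  filter_upwards [eventually_ge_atTop 1] with n hn
  have hnn : (0:ℝ) ≤ (n:ℝ) ^ (-ν-2) := Real.rpow_nonneg (Nat.cast_nonneg n) _
  rw [Real.norm_eq_abs, Real.norm_eq_abs, abs_of_nonneg hnn]
  have e1 : (∑' k : ℕ, Real.cos ((k + n + 1 : ℕ) * t) / ((k + n + 1 : ℕ) : ℝ) ^ p) = T n := by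
    rw [hT_def]
    apply tsum_congr
    intro k
    simp only [hCn_def, ha_def]
    rw [Real.rpow_neg (Nat.cast_nonneg _), div_eq_mul_inv]
  have e2 : (n:ℝ) ^ (-ν-1) = a n := by
    simp only [ha_def]
    rw [show (-ν-1 : ℝ) = -p by rw [hp_def]; ring]
  have e3 : (n:ℝ) ^ (-ν-2) = (n:ℝ) ^ (-p-1) := by
    rw [show (-ν-2 : ℝ) = -p-1 by rw [hp_def]; ring]
  have e4 : Real.sin ((2 * (n:ℝ) + 1) * t / 2) = Sn n := by rw [hSn_def]
  rw [e1, e2, e3, e4]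
  exact hmain n hn
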